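/- Let α_s, α_ℓ > 0, λ > 0, h₀ > 0, k_s > 0 and T_∞ < T_f. Define T_s(x,t) = T_∞ + (T_f − T_∞)·(1 + (h₀√(π α_s)/k_s)·erf(x/(2√(α_s t))))/(1 + (h₀√(π α_s)/k_s)·erf(λ√(α_ℓ/α_s))). Then T_s satisfies the heat equation α_s ∂_{xx}T_s = ∂_t T_s for 0 < x < 2λ√(α_ℓ t), t > 0, the convective condition k_s ∂_x T_s(0,t) = (h₀/√t)(T_s(0,t) − T_∞), and T_s(s(t), t) = T_f on the free boundary s(t) = 2λ√(α_ℓ t). -/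

import Mathlib

open Real Filter Topology Set

noncomputable def erf (x : ℝ) : ℝ := (2 / Real.sqrt Real.pi) * ∫ u in (0:ℝ)..x, Real.exp (-u^2)

noncomputable def erfc (x : ℝ) : ℝ := 1 - erf x

lemma erf_hasDerivAt (x : ℝ) :
    HasDerivAt erf ((2 / Real.sqrt Real.pi) * Real.exp (-x^2)) x := by
  have hc : Continuous fun u : ℝ => Real.exp (-u^2) := by continuity
  have h := intervalIntegral.integral_hasDerivAt_right
    (hc.intervalIntegrable 0 x) (hc.stronglyMeasurableAtFilter _ _) hc.continuousAt
  exact h.const_mul _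

lemma erf_nonneg {x : ℝ} (hx : 0 ≤ x) : 0 ≤ erf x := by
  apply mul_nonneg (by positivity)
  exact intervalIntegral.integral_nonneg hx (fun u _ => (Real.exp_pos _).le)

lemma erf_zero : erf 0 = 0 := by simp [erf]

theorem solid_phase_solution_verification (αs αl l h0 ks Tinf Tf : ℝ)
    (hαs : 0 < αs) (hαl : 0 < αl) (hl : 0 < l) (hh0 : 0 < h0) (hks : 0 < ks)
    (hT : Tinf < Tf)
    (Ts : ℝ → ℝ → ℝ)
    (hTs : ∀ x t, Ts x t =
      Tinf + (Tf - Tinf) * (1 + h0 * Real.sqrt (Real.pi * αs) / ks * erf (x / (2 * Real.sqrt (αs * t))))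
        / (1 + h0 * Real.sqrt (Real.pi * αs) / ks * erf (l * Real.sqrt (αl / αs)))) :
    (∀ x t, 0 < t → 0 < x → x < 2 * l * Real.sqrt (αl * t) →
      αs * deriv (deriv (fun y => Ts y t)) x = deriv (fun τ => Ts x τ) t) ∧
    (∀ t, 0 < t →
      ks * deriv (fun y => Ts y t) 0 = h0 / Real.sqrt t * (Ts 0 t - Tinf)) ∧
    (∀ t, 0 < t → Ts (2 * l * Real.sqrt (αl * t)) t = Tf) := by
  have hE : (0:ℝ) ≤ erf (l * Real.sqrt (αl / αs)) := erf_nonneg (by positivity)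
  have hA : (0:ℝ) < h0 * Real.sqrt (Real.pi * αs) / ks := by positivity
  have hD : (0:ℝ) < 1 + h0 * Real.sqrt (Real.pi * αs) / ks * erf (l * Real.sqrt (αl / αs)) := by
    positivity
  set A := h0 * Real.sqrt (Real.pi * αs) / ks with hAdef
  set E := erf (l * Real.sqrt (αl / αs)) with hEdef
  set c1 := Tinf + (Tf - Tinf) / (1 + A * E) with hc1
  set c2 := (Tf - Tinf) * A / (1 + A * E) with hc2
  have hTs' : ∀ x t, Ts x t = c1 + c2 * erf (x / (2 * Real.sqrt (αs * t))) := by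
    intro x t
    rw [hTs, hc1, hc2]
    field_simp
    ring
  -- spatial first derivative, generic
  have hd1 : ∀ (t : ℝ), 0 < t → ∀ y : ℝ,
      HasDerivAt (fun y => Ts y t)
        (c2 * (2 / Real.sqrt Real.pi * Real.exp (-(y / (2 * Real.sqrt (αs * t)))^2)
          * (1 / (2 * Real.sqrt (αs * t))))) y := by
    intro t ht y
    have hfun : (fun y => Ts y t) = fun y => c1 + c2 * erf (y / (2 * Real.sqrt (αs * t))) :=
      funext fun y => hTs' y t
    rw [hfun]
    have h1 : HasDerivAt (fun y : ℝ => y / (2 * Real.sqrt (αs * t)))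
        (1 / (2 * Real.sqrt (αs * t))) y := (hasDerivAt_id y).div_const _
    have h2 := (erf_hasDerivAt (y / (2 * Real.sqrt (αs * t)))).comp y h1
    exact (h2.const_mul c2).const_add c1
  refine ⟨?_, ?_, ?_⟩
  · -- heat equation
    intro x t ht hx hx2
    have hspos : 0 < Real.sqrt (αs * t) := Real.sqrt_pos.2 (mul_pos hαs ht)
    have hderiv1 : deriv (fun y => Ts y t)
        = fun y => c2 * (2 / Real.sqrt Real.pi * Real.exp (-(y / (2 * Real.sqrt (αs * t)))^2)
          * (1 / (2 * Real.sqrt (αs * t)))) :=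
      funext fun y => (hd1 t ht y).deriv
    rw [hderiv1]
    -- second spatial derivative
    have ha : HasDerivAt (fun y : ℝ => y / (2 * Real.sqrt (αs * t)))
        (1 / (2 * Real.sqrt (αs * t))) x := (hasDerivAt_id x).div_const _
    have hb := ((ha.fun_pow 2).fun_neg).exp
    have hd2 := ((hb.const_mul (2 / Real.sqrt Real.pi)).mul_const
        (1 / (2 * Real.sqrt (αs * t)))).const_mul c2
    rw [hd2.deriv]
    -- time derivative
    have hta : HasDerivAt (fun τ : ℝ => αs * τ) αs t := by
      simpa using (hasDerivAt_id t).const_mul αs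
    have htb := (Real.hasDerivAt_sqrt (mul_pos hαs ht).ne').comp t hta
    have htc := htb.const_mul 2
    have htd := (hasDerivAt_const t x).div htc (by positivity)
    have hte := (erf_hasDerivAt (x / (2 * Real.sqrt (αs * t)))).comp t htd
    have htf : HasDerivAt (fun τ => c1 + c2 * erf (x / (2 * Real.sqrt (αs * τ))))
        (c2 * (2 / Real.sqrt Real.pi * Real.exp (-(x / (2 * Real.sqrt (αs * t))) ^ 2) *
          ((0 * (2 * Real.sqrt (αs * t)) - x * (2 * (1 / (2 * Real.sqrt (αs * t)) * αs))) /
            (2 * Real.sqrt (αs * t)) ^ 2))) t := (hte.const_mul c2).const_add c1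
    have hfunt : (fun τ => Ts x τ) = fun τ => c1 + c2 * erf (x / (2 * Real.sqrt (αs * τ))) :=
      funext fun τ => hTs' x τ
    rw [hfunt, htf.deriv]
    push_cast
    field_simp
    ring
  · -- boundary condition
    intro t ht
    have hspos : 0 < Real.sqrt (αs * t) := Real.sqrt_pos.2 (mul_pos hαs ht)
    have htpos : 0 < Real.sqrt t := Real.sqrt_pos.2 ht
    have hπ : 0 < Real.sqrt Real.pi := Real.sqrt_pos.2 Real.pi_pos
    have hαspos : 0 < Real.sqrt αs := Real.sqrt_pos.2 hαs
    rw [(hd1 t ht 0).deriv, hTs' 0 t]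
    have h0div : (0:ℝ) / (2 * Real.sqrt (αs * t)) = 0 := zero_div _
    rw [h0div, erf_zero, hc1, hc2, hAdef]
    have hs1 : Real.sqrt (Real.pi * αs) = Real.sqrt Real.pi * Real.sqrt αs :=
      Real.sqrt_mul Real.pi_pos.le _
    have hs2 : Real.sqrt (αs * t) = Real.sqrt αs * Real.sqrt t :=
      Real.sqrt_mul hαs.le _
    rw [hs1, hs2]
    have hDne : (1 + A * E) ≠ 0 := hD.ne'
    rw [hAdef, hs1] at hDne
    norm_num [Real.exp_zero]
    field_simp
  · -- free boundary
    intro t ht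
    rw [hTs]
    have harg : (2 * l * Real.sqrt (αl * t)) / (2 * Real.sqrt (αs * t)) = l * Real.sqrt (αl / αs) := by
      rw [Real.sqrt_mul hαl.le, Real.sqrt_mul hαs.le, Real.sqrt_div hαl.le]
      have htpos : 0 < Real.sqrt t := Real.sqrt_pos.2 ht
      have hαspos : 0 < Real.sqrt αs := Real.sqrt_pos.2 hαs
      field_simp
    rw [harg]
    rw [mul_div_assoc, div_self hD.ne', mul_one]
    ring
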